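/- For s ≥ 3, let W(x,y) = xy⁴xy⁵x⋯xy^{4+s}x and G_s = ⟨a, b, t | t⁻¹at = b, t⁻¹bt = W(b,a)·b·W(a,b)⁻¹⟩. Then G_s is isomorphic to F_n ⋊ ℤ for n = s + 4 + (8+s)(s+1)/2, where F_n is free of rank n. -/

import Mathlib

/-- The word `W(x,y) = x y⁴ x y⁵ x ⋯ x y^(4+s) x`. -/
def W {G : Type*} [Group G] (s : ℕ) (x y : G) : G :=
  x * (((List.range (s + 1)).map fun i => y ^ (4 + i) * x).prod)

/-- Generators: `0 = a`, `1 = b`, `2 = t`.  Relations of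
`⟨a, b, t | t⁻¹at = b, t⁻¹bt = W(b,a)·b·W(a,b)⁻¹⟩`. -/
def gsrels (s : ℕ) : Set (FreeGroup (Fin 3)) :=
  {(FreeGroup.of 2)⁻¹ * FreeGroup.of 0 * FreeGroup.of 2 * (FreeGroup.of 1)⁻¹,
   (FreeGroup.of 2)⁻¹ * FreeGroup.of 1 * FreeGroup.of 2 *
     (W s (FreeGroup.of 1) (FreeGroup.of 0) * FreeGroup.of 1 *
       (W s (FreeGroup.of 0) (FreeGroup.of 1))⁻¹)⁻¹}

namespace Stmt16

/-- partial sums of block lengths: `cc j = Σ_{i<j} (5+i)` -/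
def cc : ℕ → ℕ
  | 0 => 0
  | i + 1 => cc i + 5 + i

lemma cc_succ (i : ℕ) : cc (i + 1) = cc i + 5 + i := rfl

lemma cc_mono : Monotone cc :=
  monotone_nat_of_le_succ (fun i => by rw [cc_succ]; omega)

lemma two_cc (j : ℕ) : 2 * cc j = j * (j + 9) := by
  induction j with
  | zero => simp [cc]
  | succ j ih =>
    rw [cc_succ]
    zify at ih ⊢
    linear_combination ih

section Generic

variable {Q Q' : Type*} [Group Q] [Group Q']

/-- partial words of `W` -/
def Wp (j : ℕ) (x y : Q) : Q := x * (((List.range j).map fun i => y ^ (4 + i) * x).prod)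

lemma W_eq_Wp (s : ℕ) (x y : Q) : W s x y = Wp (s + 1) x y := rfl

lemma Wp_succ (j : ℕ) (x y : Q) : Wp (j + 1) x y = Wp j x y * (y ^ (4 + j) * x) := by
  simp [Wp, List.range_succ, mul_assoc]

lemma map_Wp (ψ : Q →* Q') (j : ℕ) (x y : Q) : ψ (Wp j x y) = Wp j (ψ x) (ψ y) := by
  induction j with
  | zero => simp [Wp]
  | succ j ih => rw [Wp_succ, Wp_succ, ← ih]; simp

def Tp (A t : Q) (k : ℤ) : Q := A ^ k * t * A ^ (-k - 1)

def Up (G : ℤ → Q) (k : ℤ) (j : ℕ) : Q :=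
  ((List.range j).map fun i => (G (k + cc i))⁻¹ * G (k + cc i + 4 + i)).prod

def Vp (G : ℤ → Q) (k : ℤ) (j : ℕ) : Q :=
  ((List.range j).map fun i => (G (k + cc i - 1))⁻¹ * G (k + cc i)).prod

lemma Up_succ (G : ℤ → Q) (k : ℤ) (j : ℕ) :
    Up G k (j + 1) = Up G k j * ((G (k + cc j))⁻¹ * G (k + cc j + 4 + j)) := by
  simp [Up, List.range_succ]

lemma Vp_succ (G : ℤ → Q) (k : ℤ) (j : ℕ) :
    Vp G k (j + 1) = Vp G k j * ((G (k + cc j - 1))⁻¹ * G (k + cc j)) := by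
  simp [Vp, List.range_succ]

lemma Up_congr {G G' : ℤ → Q} {k k' : ℤ} (j : ℕ)
    (h : ∀ i, i < j → G (k + cc i) = G' (k' + cc i) ∧
      G (k + cc i + 4 + i) = G' (k' + cc i + 4 + i)) :
    Up G k j = Up G' k' j := by
  unfold Up
  congr 1
  apply List.map_congr_left
  intro i hi
  rw [List.mem_range] at hi
  rw [(h i hi).1, (h i hi).2]

lemma Vp_congr {G G' : ℤ → Q} {k k' : ℤ} (j : ℕ)
    (h : ∀ i, i < j → G (k + cc i - 1) = G' (k' + cc i - 1) ∧
      G (k + cc i) = G' (k' + cc i)) :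
    Vp G k j = Vp G' k' j := by
  unfold Vp
  congr 1
  apply List.map_congr_left
  intro i hi
  rw [List.mem_range] at hi
  rw [(h i hi).1, (h i hi).2]

lemma map_Up (ψ : Q →* Q') (G : ℤ → Q) (k : ℤ) (j : ℕ) :
    ψ (Up G k j) = Up (fun m => ψ (G m)) k j := by
  unfold Up
  rw [map_list_prod, List.map_map]
  congr 1
  apply List.map_congr_left
  intro i _
  simp

lemma map_Vp (ψ : Q →* Q') (G : ℤ → Q) (k : ℤ) (j : ℕ) :
    ψ (Vp G k j) = Vp (fun m => ψ (G m)) k j := by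
  unfold Vp
  rw [map_list_prod, List.map_map]
  congr 1
  apply List.map_congr_left
  intro i _
  simp

variable {A b t : Q}

lemma GLb (hb : b = t⁻¹ * A * t) (e : ℤ) :
    A ^ e * b = (Tp A t (e - 1))⁻¹ * Tp A t e * A ^ (e + 1) := by
  rw [hb]; unfold Tp; group

lemma GLpow (hb : b = t⁻¹ * A * t) (q : ℕ) (k : ℤ) :
    A ^ k * b ^ q = (Tp A t (k - 1))⁻¹ * Tp A t (k + q - 1) * A ^ (k + q) := by
  induction q with
  | zero =>
    rw [show ((0:ℕ):ℤ) = 0 from rfl]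
    rw [show k + (0:ℤ) - 1 = k - 1 by ring, show k + (0:ℤ) = k by ring]
    group
  | succ q ih =>
    rw [pow_succ, show A ^ k * (b ^ q * b) = (A ^ k * b ^ q) * b by group, ih,
      mul_assoc, mul_assoc, GLb hb (k + q)]
    push_cast
    rw [show k + (q + 1 : ℤ) - 1 = k + q by ring, show k + ((q:ℤ) + 1) = k + q + 1 by ring]
    group


lemma GLpow' (hb : b = t⁻¹ * A * t) (q : ℕ) (k e1 e2 e3 : ℤ)
    (h1 : e1 = k - 1) (h2 : e2 = k + q - 1) (h3 : e3 = k + q) :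
    A ^ k * b ^ q = (Tp A t e1)⁻¹ * Tp A t e2 * A ^ e3 := by
  subst h1 h2 h3; exact GLpow hb q k

lemma GLWab (hb : b = t⁻¹ * A * t) (j : ℕ) (k : ℤ) :
    A ^ k * Wp j A b = Up (Tp A t) k j * A ^ (k + 1 + cc j) := by
  induction j with
  | zero =>
    simp only [Wp, List.range_zero, List.map_nil, List.prod_nil, mul_one, Up, cc,
      Nat.cast_zero, add_zero]
    group
  | succ j ih =>
    calc A ^ k * Wp (j + 1) A b
        = (A ^ k * Wp j A b) * (A ^ (k + 1 + (cc j : ℤ)))⁻¹ *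
            (A ^ (k + 1 + (cc j : ℤ)) * b ^ (4 + j)) * A := by rw [Wp_succ]; group
      _ = (Up (Tp A t) k j * A ^ (k + 1 + (cc j : ℤ))) * (A ^ (k + 1 + (cc j : ℤ)))⁻¹ *
            ((Tp A t (k + cc j))⁻¹ * Tp A t (k + cc j + 4 + j) *
              A ^ (k + 1 + (cc j : ℤ) + (4 + j))) * A := by
          rw [ih, GLpow' hb (4 + j) (k + 1 + (cc j : ℤ)) (k + cc j) (k + cc j + 4 + j)
            (k + 1 + (cc j : ℤ) + (4 + j)) (by push_cast; ring)
            (by push_cast; ring) (by push_cast; ring)]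
      _ = Up (Tp A t) k j * ((Tp A t (k + cc j))⁻¹ * Tp A t (k + cc j + 4 + j)) *
            A ^ (k + 1 + (cc j : ℤ) + (4 + j) + 1) := by group
      _ = Up (Tp A t) k (j + 1) * A ^ (k + 1 + cc (j + 1)) := by
          rw [Up_succ, cc_succ]
          push_cast
          rw [show k + 1 + ((cc j : ℤ) + 5 + (j : ℤ)) = k + 1 + (cc j : ℤ) + (4 + (j:ℤ)) + 1 by ring]

lemma GLWba (hb : b = t⁻¹ * A * t) (j : ℕ) (k : ℤ) :
    A ^ k * Wp j b A = Vp (Tp A t) k (j + 1) * A ^ (k + 1 + cc j) := by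
  induction j with
  | zero =>
    simp only [Wp, List.range_zero, List.map_nil, List.prod_nil, mul_one, cc, Nat.cast_zero,
      add_zero]
    rw [GLb hb k, show Vp (Tp A t) k 1 = (Tp A t (k + cc 0 - 1))⁻¹ * Tp A t (k + cc 0) by
      simp [Vp, List.range_succ]]
    simp [cc]
  | succ j ih =>
    calc A ^ k * Wp (j + 1) b A
        = (A ^ k * Wp j b A) * A ^ ((4 + j : ℕ) : ℤ) * b := by
          rw [Wp_succ, zpow_natCast]; group
      _ = Vp (Tp A t) k (j + 1) * (A ^ (k + 1 + (cc j : ℤ) + ((4 + j : ℕ) : ℤ)) * b) := by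
          rw [ih]; group
      _ = Vp (Tp A t) k (j + 1) * (A ^ (k + (cc (j + 1) : ℤ)) * b) := by
          rw [show k + 1 + (cc j : ℤ) + ((4 + j : ℕ) : ℤ) = k + (cc (j + 1) : ℤ) by
            rw [cc_succ]; push_cast; ring]
      _ = Vp (Tp A t) k (j + 1) * ((Tp A t (k + cc (j + 1) - 1))⁻¹ * Tp A t (k + cc (j + 1)) *
            A ^ (k + (cc (j + 1) : ℤ) + 1)) := by
          rw [GLb hb (k + cc (j + 1))]
      _ = (Vp (Tp A t) k (j + 1) * ((Tp A t (k + cc (j + 1) - 1))⁻¹ * Tp A t (k + cc (j + 1))))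
            * A ^ (k + (cc (j + 1) : ℤ) + 1) := by group
      _ = Vp (Tp A t) k (j + 1 + 1) * A ^ (k + 1 + cc (j + 1)) := by
          rw [show k + (cc (j + 1) : ℤ) + 1 = k + 1 + cc (j + 1) by ring]
          conv_rhs => rw [Vp_succ]

def RelG (s : ℕ) (G : ℤ → Q) (k : ℤ) : Prop :=
  (G (k - 1))⁻¹ * (G (k - 2))⁻¹ * G (k - 1) * G k =
    Vp G k (s + 2) * (G (k + cc (s + 1)))⁻¹ * G (k + cc (s + 1) + 1) * (Up G (k + 1) (s + 1))⁻¹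

lemma RelG_map (s : ℕ) (ψ : Q →* Q') (G : ℤ → Q) (G' : ℤ → Q') (d k : ℤ)
    (hψ : ∀ m, ψ (G m) = G' (m + d)) (h : RelG s G k) : RelG s G' (k + d) := by
  unfold RelG at h ⊢
  have H := congrArg ψ h
  simp only [map_mul, map_inv, map_Up, map_Vp] at H
  rw [Vp_congr (G := fun m => ψ (G m)) (G' := G') (k := k) (k' := k + d) (s + 2)
      (fun i _ => ⟨(hψ _).trans (congrArg G' (by ring)), (hψ _).trans (congrArg G' (by ring))⟩),
    Up_congr (G := fun m => ψ (G m)) (G' := G') (k := k + 1) (k' := k + d + 1) (s + 1)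
      (fun i _ => ⟨(hψ _).trans (congrArg G' (by ring)),
        (hψ _).trans (congrArg G' (by ring))⟩)] at H
  simp only [hψ] at H
  rw [show k - 1 + d = k + d - 1 by ring, show k - 2 + d = k + d - 2 by ring,
      show k + (cc (s + 1) : ℤ) + d = k + d + cc (s + 1) by ring,
      show k + (cc (s + 1) : ℤ) + 1 + d = k + d + cc (s + 1) + 1 by ring] at H
  exact H

lemma GL1 (hb : b = t⁻¹ * A * t) :
    t⁻¹ * b * t = (Tp A t (-1))⁻¹ * (Tp A t (-2))⁻¹ * Tp A t (-1) * Tp A t 0 * A := by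
  rw [hb]; unfold Tp; group

lemma GL2 (s : ℕ) (hb : b = t⁻¹ * A * t) :
    W s b A * b * (W s A b)⁻¹ =
      Vp (Tp A t) 0 (s + 2) * (Tp A t (cc (s + 1)))⁻¹ * Tp A t (cc (s + 1) + 1) *
        (Up (Tp A t) 1 (s + 1))⁻¹ * A := by
  have h1 := GLWba hb (s + 1) 0
  rw [zpow_zero, one_mul] at h1
  have h2 := GLWab hb (s + 1) 1
  have h2' : Wp (s + 1) A b = A ^ (-1 : ℤ) * (Up (Tp A t) 1 (s + 1) *
      A ^ ((1 : ℤ) + 1 + (cc (s + 1) : ℤ))) := by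
    rw [← h2]; group
  have h3 := GLb hb (1 + (cc (s + 1) : ℤ))
  rw [W_eq_Wp, W_eq_Wp]
  calc Wp (s + 1) b A * b * (Wp (s + 1) A b)⁻¹
      = Vp (Tp A t) 0 (s + 2) * (A ^ ((1 : ℤ) + (cc (s + 1) : ℤ)) * b) *
          (Wp (s + 1) A b)⁻¹ := by
        rw [h1, show (0 : ℤ) + 1 + (cc (s + 1) : ℤ) = 1 + (cc (s + 1) : ℤ) by ring]; group
    _ = Vp (Tp A t) 0 (s + 2) *
          ((Tp A t (1 + (cc (s + 1) : ℤ) - 1))⁻¹ * Tp A t (1 + (cc (s + 1) : ℤ)) *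
            A ^ (1 + (cc (s + 1) : ℤ) + 1)) *
          (A ^ (-1 : ℤ) * (Up (Tp A t) 1 (s + 1) * A ^ ((1 : ℤ) + 1 + (cc (s + 1) : ℤ))))⁻¹ := by
        rw [h3, h2']
    _ = Vp (Tp A t) 0 (s + 2) * (Tp A t (cc (s + 1)))⁻¹ * Tp A t (cc (s + 1) + 1) *
          (Up (Tp A t) 1 (s + 1))⁻¹ * A := by
        rw [show 1 + (cc (s + 1) : ℤ) - 1 = (cc (s + 1) : ℤ) by ring,
          show 1 + (cc (s + 1) : ℤ) = (cc (s + 1) : ℤ) + 1 by ring]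
        group

lemma rel_iff (s : ℕ) (hb : b = t⁻¹ * A * t) :
    (t⁻¹ * b * t = W s b A * b * (W s A b)⁻¹) ↔ RelG s (Tp A t) 0 := by
  have e1 := GL1 hb
  have e2 := GL2 s hb
  unfold RelG
  rw [show (0 : ℤ) - 1 = -1 by ring, show (0 : ℤ) - 2 = -2 by ring,
    show (0 : ℤ) + (cc (s + 1) : ℤ) = (cc (s + 1) : ℤ) by ring,
    show (0 : ℤ) + 1 = (1 : ℤ) by ring]
  constructor
  · intro h
    exact mul_right_cancel (e1.symm.trans (h.trans e2))
  · intro h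
    rw [e1, e2, h]

lemma rel_shift (s : ℕ) (h : RelG s (Tp A t) 0) (k : ℤ) : RelG s (Tp A t) k := by
  have := RelG_map s (MulAut.conj (A ^ k)).toMonoidHom (Tp A t) (Tp A t) k 0
    (fun m => by
      simp only [MulEquiv.coe_toMonoidHom, MulAut.conj_apply]
      unfold Tp
      group) h
  rwa [zero_add] at this


lemma map_Tp (ψ : Q →* Q') (A t : Q) (k : ℤ) : ψ (Tp A t k) = Tp (ψ A) (ψ t) k := by
  unfold Tp
  simp [map_zpow]

lemma map_W (ψ : Q →* Q') (s : ℕ) (x y : Q) : ψ (W s x y) = W s (ψ x) (ψ y) := by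
  rw [W_eq_Wp, W_eq_Wp, map_Wp]

lemma solveTop {t0 t1 t2 tm1 tm2 v u : Q}
    (h : t1⁻¹ * t0⁻¹ * t1 * t2 = v * tm1⁻¹ * tm2 * u⁻¹) :
    tm1 * v⁻¹ * t1⁻¹ * t0⁻¹ * t1 * t2 * u = tm2 := by
  have key : tm1 * v⁻¹ * t1⁻¹ * t0⁻¹ * t1 * t2 * u * tm2⁻¹
      = tm1 * v⁻¹ * (t1⁻¹ * t0⁻¹ * t1 * t2) * u * tm2⁻¹ := by group
  rw [h] at key
  exact mul_inv_eq_one.mp (key.trans (by group))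

lemma solveBot {t0 t1 tm1 tm2 tneg v u : Q}
    (h : t0⁻¹ * tneg⁻¹ * t0 * t1 = v * tm1⁻¹ * tm2 * u⁻¹) :
    t0 * t1 * u * tm2⁻¹ * tm1 * v⁻¹ * t0⁻¹ = tneg := by
  have key : t0 * t1 * u * tm2⁻¹ * tm1 * v⁻¹ * t0⁻¹ * tneg⁻¹
      = t0 * t1 * u * tm2⁻¹ * tm1 * v⁻¹ * (t0⁻¹ * tneg⁻¹ * t0 * t1) * t1⁻¹ * t0⁻¹ := by group
  rw [h] at key
  exact mul_inv_eq_one.mp (key.trans (by group))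


end Generic

section Fiber

variable (s : ℕ)

/-- the rank appearing in the statement -/
def nn : ℕ := s + 4 + (8 + s) * (s + 1) / 2

lemma nn_eq : nn s = cc (s + 1) + 3 := by
  have e1 := two_cc (s + 1)
  have e4 : (8 + s) * (s + 1) = 8 * (s + 1) + s * (s + 1) := by ring
  have e5 : Even (s * (s + 1)) := Nat.even_mul_succ_self s
  obtain ⟨c0, hc0⟩ := e5
  have e2 : 2 * ((8 + s) * (s + 1) / 2) = (8 + s) * (s + 1) := by
    rw [Nat.mul_div_cancel']
    exact ⟨4 * (s + 1) + c0, by linarith⟩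
  have e3 : (s + 1) * (s + 1 + 9) = (8 + s) * (s + 1) + 2 * (s + 1) := by ring
  unfold nn
  linarith

abbrev FF := FreeGroup (Fin (nn s))

def gg (j : ℤ) : FF s :=
  if h : 0 ≤ j ∧ j < (nn s : ℤ) then FreeGroup.of ⟨j.toNat, by omega⟩ else 1

lemma gg_of (x : Fin (nn s)) : gg s (x : ℕ) = FreeGroup.of x := by
  unfold gg
  rw [dif_pos ⟨Int.ofNat_nonneg _, by exact_mod_cast x.2⟩]
  exact congrArg FreeGroup.of (by ext; simp)

def Wtop : FF s :=
  gg s ((cc (s + 1) : ℤ) + 2) * (Vp (gg s) 2 (s + 2))⁻¹ * (gg s 1)⁻¹ * (gg s 0)⁻¹ *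
    gg s 1 * gg s 2 * Up (gg s) 3 (s + 1)

def Wbot : FF s :=
  gg s 0 * gg s 1 * Up (gg s) 2 (s + 1) * (gg s ((cc (s + 1) : ℤ) + 2))⁻¹ *
    gg s ((cc (s + 1) : ℤ) + 1) * (Vp (gg s) 1 (s + 2))⁻¹ * (gg s 0)⁻¹

def af : FF s →* FF s :=
  FreeGroup.lift fun x : Fin (nn s) =>
    if (x : ℕ) < cc (s + 1) + 2 then gg s ((x : ℕ) + 1) else Wtop s

def bf : FF s →* FF s :=
  FreeGroup.lift fun x : Fin (nn s) =>
    if (x : ℕ) = 0 then Wbot s else gg s ((x : ℕ) - 1)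

lemma af_g {j : ℤ} (h0 : 0 ≤ j) (h1 : j ≤ (cc (s + 1) : ℤ) + 1) :
    af s (gg s j) = gg s (j + 1) := by
  have hn := nn_eq s
  have hj : 0 ≤ j ∧ j < (nn s : ℤ) := ⟨h0, by omega⟩
  rw [show gg s j = FreeGroup.of (⟨j.toNat, by omega⟩ : Fin (nn s)) from dif_pos hj]
  unfold af
  rw [FreeGroup.lift_apply_of, if_pos (by simp; omega)]
  congr 1
  simp only [Fin.val_mk]
  omega

lemma af_top : af s (gg s ((cc (s + 1) : ℤ) + 2)) = Wtop s := by
  have hn := nn_eq s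
  have hj : 0 ≤ ((cc (s + 1) : ℤ) + 2) ∧ ((cc (s + 1) : ℤ) + 2) < (nn s : ℤ) :=
    ⟨by omega, by omega⟩
  rw [show gg s ((cc (s + 1) : ℤ) + 2)
      = FreeGroup.of (⟨((cc (s + 1) : ℤ) + 2).toNat, by omega⟩ : Fin (nn s)) from dif_pos hj]
  unfold af
  rw [FreeGroup.lift_apply_of, if_neg (by simp)]

lemma bf_g {j : ℤ} (h0 : 1 ≤ j) (h1 : j ≤ (cc (s + 1) : ℤ) + 2) :
    bf s (gg s j) = gg s (j - 1) := by
  have hn := nn_eq s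
  have hj : 0 ≤ j ∧ j < (nn s : ℤ) := ⟨by omega, by omega⟩
  rw [show gg s j = FreeGroup.of (⟨j.toNat, by omega⟩ : Fin (nn s)) from dif_pos hj]
  unfold bf
  rw [FreeGroup.lift_apply_of, if_neg (by simp; omega)]
  congr 1
  simp only [Fin.val_mk]
  omega

lemma bf_0 : bf s (gg s 0) = Wbot s := by
  have hn := nn_eq s
  have hj : 0 ≤ (0 : ℤ) ∧ (0 : ℤ) < (nn s : ℤ) := ⟨le_refl _, by omega⟩
  rw [show gg s 0 = FreeGroup.of (⟨(0 : ℤ).toNat, by omega⟩ : Fin (nn s)) from dif_pos hj]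
  unfold bf
  rw [FreeGroup.lift_apply_of, if_pos (by simp)]

lemma bfaf : (bf s).comp (af s) = MonoidHom.id (FF s) := by
  apply FreeGroup.ext_hom
  intro x
  have hn := nn_eq s
  have hx2 : (x : ℕ) < cc (s + 1) + 3 := by have := x.2; omega
  simp only [MonoidHom.comp_apply, MonoidHom.id_apply]
  rw [← gg_of s x]
  by_cases hx : (x : ℕ) < cc (s + 1) + 2
  · rw [af_g s (Int.ofNat_nonneg _) (by omega), bf_g s (by omega) (by omega)]
    exact congrArg (gg s) (by ring)
  · have hxe : ((x : ℕ) : ℤ) = (cc (s + 1) : ℤ) + 2 := by omega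
    rw [hxe, af_top]
    unfold Wtop
    simp only [map_mul, map_inv]
    rw [map_Vp, map_Up]
    rw [bf_g s (by omega) (by omega)]
    rw [bf_g s (by omega) (by omega)]
    rw [bf_0]
    rw [bf_g s (by omega) (by omega)]
    rw [Vp_congr (G' := gg s) (k' := 1) (s + 2) (fun i hi => by
      have hle : cc i ≤ cc (s + 1) := cc_mono (by omega)
      constructor
      · show bf s (gg s (2 + cc i - 1)) = gg s (1 + cc i - 1)
        rw [bf_g s (by omega) (by omega)]
        exact congrArg (gg s) (by ring)
      · show bf s (gg s (2 + cc i)) = gg s (1 + cc i)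
        rw [bf_g s (by omega) (by omega)]
        exact congrArg (gg s) (by ring))]
    rw [Up_congr (G' := gg s) (k' := 2) (s + 1) (fun i hi => by
      have hle : cc i ≤ cc s := cc_mono (by omega)
      have hcs : cc (s + 1) = cc s + 5 + s := cc_succ s
      constructor
      · show bf s (gg s (3 + cc i)) = gg s (2 + cc i)
        rw [bf_g s (by omega) (by omega)]
        exact congrArg (gg s) (by ring)
      · show bf s (gg s (3 + cc i + 4 + i)) = gg s (2 + cc i + 4 + i)
        rw [bf_g s (by omega) (by omega)]
        exact congrArg (gg s) (by ring))]
    rw [show (cc (s + 1) : ℤ) + 2 - 1 = (cc (s + 1) : ℤ) + 1 by ring,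
      show (1 : ℤ) - 1 = 0 by ring, show (2 : ℤ) - 1 = 1 by ring]
    unfold Wbot
    group

lemma afbf : (af s).comp (bf s) = MonoidHom.id (FF s) := by
  apply FreeGroup.ext_hom
  intro x
  have hn := nn_eq s
  have hx2 : (x : ℕ) < cc (s + 1) + 3 := by have := x.2; omega
  simp only [MonoidHom.comp_apply, MonoidHom.id_apply]
  rw [← gg_of s x]
  by_cases hx : (x : ℕ) = 0
  · rw [hx]
    rw [show ((0 : ℕ) : ℤ) = 0 from rfl, bf_0]
    unfold Wbot
    simp only [map_mul, map_inv]
    rw [map_Vp, map_Up]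
    rw [af_g s (by omega) (by omega)]
    rw [af_g s (by omega) (by omega)]
    rw [af_top]
    rw [af_g s (by omega) (by omega)]
    rw [Vp_congr (G' := gg s) (k' := 2) (s + 2) (fun i hi => by
      have hle : cc i ≤ cc (s + 1) := cc_mono (by omega)
      constructor
      · show af s (gg s (1 + cc i - 1)) = gg s (2 + cc i - 1)
        rw [af_g s (by omega) (by omega)]
        exact congrArg (gg s) (by ring)
      · show af s (gg s (1 + cc i)) = gg s (2 + cc i)
        rw [af_g s (by omega) (by omega)]
        exact congrArg (gg s) (by ring))]
    rw [Up_congr (G' := gg s) (k' := 3) (s + 1) (fun i hi => by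
      have hle : cc i ≤ cc s := cc_mono (by omega)
      have hcs : cc (s + 1) = cc s + 5 + s := cc_succ s
      constructor
      · show af s (gg s (2 + cc i)) = gg s (3 + cc i)
        rw [af_g s (by omega) (by omega)]
        exact congrArg (gg s) (by ring)
      · show af s (gg s (2 + cc i + 4 + i)) = gg s (3 + cc i + 4 + i)
        rw [af_g s (by omega) (by omega)]
        exact congrArg (gg s) (by ring))]
    rw [show (0 : ℤ) + 1 = 1 by ring, show (1 : ℤ) + 1 = 2 by ring,
      show (cc (s + 1) : ℤ) + 1 + 1 = (cc (s + 1) : ℤ) + 2 by ring]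
    unfold Wtop
    group
  · rw [bf_g s (by omega) (by omega),
      af_g s (by omega) (by omega)]
    exact congrArg (gg s) (by ring)


def ee : MulAut (FF s) := MonoidHom.toMulEquiv (af s) (bf s) (bfaf s) (afbf s)

lemma ee_apply (y : FF s) : ee s y = af s y := rfl

lemma ee_symm_apply (y : FF s) : (ee s)⁻¹ y = bf s y := rfl

def GF (k : ℤ) : FF s := (ee s ^ k) (gg s 0)

lemma GF_shift (d m : ℤ) : (ee s ^ d) (GF s m) = GF s (m + d) := by
  unfold GF
  rw [← MulAut.mul_apply, ← zpow_add]
  exact congrArg (fun r : ℤ => (ee s ^ r) (gg s 0)) (by ring)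

lemma GF_zero : GF s 0 = gg s 0 := by
  unfold GF
  rw [zpow_zero]
  rfl

lemma GF_succ_af (m : ℤ) : GF s (m + 1) = af s (GF s m) := by
  rw [← GF_shift s 1 m, zpow_one, ee_apply]

lemma GF_pred_bf (m : ℤ) : GF s (m - 1) = bf s (GF s m) := by
  rw [show m - 1 = m + (-1) by ring, ← GF_shift s (-1) m, zpow_neg_one, ee_symm_apply]

lemma GF_eq {j : ℤ} (h0 : 0 ≤ j) (h1 : j ≤ (cc (s + 1) : ℤ) + 2) : GF s j = gg s j := by
  have key : ∀ q : ℕ, (q : ℤ) ≤ (cc (s + 1) : ℤ) + 2 → GF s q = gg s q := by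
    intro q
    induction q with
    | zero => intro _; exact_mod_cast GF_zero s
    | succ q ih =>
      intro hq
      push_cast
      rw [GF_succ_af, ih (by push_cast at hq; omega), af_g s (by omega)
        (by push_cast at hq; omega)]
  have hj : j = (j.toNat : ℤ) := by omega
  rw [hj]
  exact key j.toNat (by omega)

lemma GF_neg1 : GF s (-1) = Wbot s := by
  rw [show (-1 : ℤ) = 0 - 1 by ring, GF_pred_bf, GF_zero, bf_0]

lemma FiberRel1 : RelG s (GF s) 1 := by
  unfold RelG
  rw [show (1 : ℤ) - 1 = 0 by ring, show (1 : ℤ) - 2 = -1 by ring, show (1 : ℤ) + 1 = 2 by ring,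
    GF_neg1]
  rw [GF_eq s (by omega) (by omega)]
  rw [GF_eq s (by omega) (by omega)]
  rw [GF_eq s (by omega) (by omega)]
  rw [GF_eq s (by omega) (by omega)]
  rw [Vp_congr (G' := gg s) (k' := 1) (s + 2) (fun i hi => by
    have hle : cc i ≤ cc (s + 1) := cc_mono (by omega)
    exact ⟨GF_eq s (by omega) (by omega), GF_eq s (by omega) (by omega)⟩)]
  rw [Up_congr (G' := gg s) (k' := 2) (s + 1) (fun i hi => by
    have hle : cc i ≤ cc s := cc_mono (by omega)
    have hcs : cc (s + 1) = cc s + 5 + s := cc_succ s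
    exact ⟨GF_eq s (by omega) (by omega), GF_eq s (by omega) (by omega)⟩)]
  rw [show (1 : ℤ) + (cc (s + 1) : ℤ) = (cc (s + 1) : ℤ) + 1 by ring,
    show (cc (s + 1) : ℤ) + 1 + 1 = (cc (s + 1) : ℤ) + 2 by ring]
  unfold Wbot
  group

lemma FiberRel (k : ℤ) : RelG s (GF s) k := by
  have h1 := FiberRel1 s
  have h2 := RelG_map s (ee s ^ (k - 1)).toMonoidHom (GF s) (GF s) (k - 1) 1
    (fun m => by rw [MulEquiv.coe_toMonoidHom]; exact GF_shift s (k - 1) m) h1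
  rwa [show 1 + (k - 1) = k by ring] at h2


end Fiber


section PSide

variable (s : ℕ)

abbrev PG := PresentedGroup (gsrels s)

def AP : PG s := PresentedGroup.of 0
def bP : PG s := PresentedGroup.of 1
def tP : PG s := PresentedGroup.of 2

lemma mk_rel_one {r : FreeGroup (Fin 3)} (hr : r ∈ gsrels s) :
    PresentedGroup.mk (gsrels s) r = 1 := by
  have : r ∈ Subgroup.normalClosure (gsrels s) := Subgroup.subset_normalClosure hr
  exact (QuotientGroup.eq_one_iff r).mpr this

lemma hbP : bP s = (tP s)⁻¹ * AP s * tP s := by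
  have h := mk_rel_one s (show (FreeGroup.of 2)⁻¹ * FreeGroup.of 0 * FreeGroup.of 2 *
    (FreeGroup.of 1)⁻¹ ∈ gsrels s from Set.mem_insert _ _)
  simp only [map_mul, map_inv] at h
  rw [mul_inv_eq_one] at h
  exact h.symm

lemma h2P : (tP s)⁻¹ * bP s * tP s = W s (bP s) (AP s) * bP s * (W s (AP s) (bP s))⁻¹ := by
  have h := mk_rel_one s (show (FreeGroup.of 2)⁻¹ * FreeGroup.of 1 * FreeGroup.of 2 *
      (W s (FreeGroup.of 1) (FreeGroup.of 0) * FreeGroup.of 1 *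
        (W s (FreeGroup.of 0) (FreeGroup.of 1))⁻¹)⁻¹ ∈ gsrels s from
    Set.mem_insert_of_mem _ rfl)
  simp only [map_mul, map_inv, map_W] at h
  rw [mul_inv_eq_one] at h
  exact h

lemma RelP (k : ℤ) : RelG s (Tp (AP s) (tP s)) k :=
  rel_shift s ((rel_iff s (hbP s)).mp (h2P s)) k

def f1 : FF s →* PG s :=
  FreeGroup.lift fun x : Fin (nn s) => Tp (AP s) (tP s) ((x : ℕ) : ℤ)

lemma f1_g {j : ℤ} (h0 : 0 ≤ j) (h1 : j < (nn s : ℤ)) :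
    f1 s (gg s j) = Tp (AP s) (tP s) j := by
  rw [show gg s j = FreeGroup.of (⟨j.toNat, by omega⟩ : Fin (nn s)) from dif_pos ⟨h0, h1⟩]
  unfold f1
  rw [FreeGroup.lift_apply_of]
  exact congrArg (Tp (AP s) (tP s)) (by simp only [Fin.val_mk]; omega)

lemma f1_Wtop : f1 s (Wtop s) = Tp (AP s) (tP s) ((cc (s + 1) : ℤ) + 3) := by
  have hn := nn_eq s
  have hrel := RelP s 2
  unfold RelG at hrel
  rw [show (2 : ℤ) - 1 = 1 by ring, show (2 : ℤ) - 2 = 0 by ring,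
    show (2 : ℤ) + (cc (s + 1) : ℤ) = (cc (s + 1) : ℤ) + 2 by ring,
    show (cc (s + 1) : ℤ) + 2 + 1 = (cc (s + 1) : ℤ) + 3 by ring,
    show (2 : ℤ) + 1 = 3 by ring] at hrel
  unfold Wtop
  simp only [map_mul, map_inv]
  rw [map_Vp, map_Up]
  rw [f1_g s (by omega) (by omega)]
  rw [f1_g s (by omega) (by omega)]
  rw [f1_g s (by omega) (by omega)]
  rw [f1_g s (by omega) (by omega)]
  rw [Vp_congr (G' := Tp (AP s) (tP s)) (k' := 2) (s + 2) (fun i hi => by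
    have hle : cc i ≤ cc (s + 1) := cc_mono (by omega)
    exact ⟨f1_g s (by omega) (by omega), f1_g s (by omega) (by omega)⟩)]
  rw [Up_congr (G' := Tp (AP s) (tP s)) (k' := 3) (s + 1) (fun i hi => by
    have hle : cc i ≤ cc s := cc_mono (by omega)
    have hcs : cc (s + 1) = cc s + 5 + s := cc_succ s
    exact ⟨f1_g s (by omega) (by omega), f1_g s (by omega) (by omega)⟩)]
  exact solveTop hrel

lemma f1_Wbot : f1 s (Wbot s) = Tp (AP s) (tP s) (-1) := by
  have hn := nn_eq s
  have hrel := RelP s 1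
  unfold RelG at hrel
  rw [show (1 : ℤ) - 1 = 0 by ring, show (1 : ℤ) - 2 = -1 by ring,
    show (1 : ℤ) + (cc (s + 1) : ℤ) = (cc (s + 1) : ℤ) + 1 by ring,
    show (cc (s + 1) : ℤ) + 1 + 1 = (cc (s + 1) : ℤ) + 2 by ring,
    show (1 : ℤ) + 1 = 2 by ring] at hrel
  unfold Wbot
  simp only [map_mul, map_inv]
  rw [map_Vp, map_Up]
  rw [f1_g s (by omega) (by omega)]
  rw [f1_g s (by omega) (by omega)]
  rw [f1_g s (by omega) (by omega)]
  rw [f1_g s (by omega) (by omega)]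
  rw [Vp_congr (G' := Tp (AP s) (tP s)) (k' := 1) (s + 2) (fun i hi => by
    have hle : cc i ≤ cc (s + 1) := cc_mono (by omega)
    exact ⟨f1_g s (by omega) (by omega), f1_g s (by omega) (by omega)⟩)]
  rw [Up_congr (G' := Tp (AP s) (tP s)) (k' := 2) (s + 1) (fun i hi => by
    have hle : cc i ≤ cc s := cc_mono (by omega)
    have hcs : cc (s + 1) = cc s + 5 + s := cc_succ s
    exact ⟨f1_g s (by omega) (by omega), f1_g s (by omega) (by omega)⟩)]
  exact solveBot hrel

end PSide


section SDPSide

open SemidirectProduct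

variable (s : ℕ)

def phiF : Multiplicative ℤ →* MulAut (FF s) := zpowersHom (MulAut (FF s)) (ee s)

abbrev SDP := (FF s) ⋊[phiF s] Multiplicative ℤ

def zmul : Multiplicative ℤ := Multiplicative.ofAdd 1

lemma zmul_zpow (k : ℤ) : Multiplicative.toAdd (zmul ^ k) = k := by
  simp [zmul]

lemma phiF_pow (k : ℤ) : phiF s (zmul ^ k) = ee s ^ k := by
  rw [phiF, zpowersHom_apply, zmul_zpow]

def fa : SDP s := inr zmul
def ft : SDP s := inl (gg s 0) * fa s
def fb : SDP s := inl ((Wbot s)⁻¹ * gg s 0) * fa s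

lemma fa_zpow (k : ℤ) : fa s ^ k = inr (zmul ^ k) := by
  rw [fa, ← map_zpow]

lemma fa_conj_inl (k : ℤ) (x : FF s) :
    fa s ^ k * inl x * (fa s ^ k)⁻¹ = inl ((ee s ^ k) x) := by
  rw [fa_zpow, ← phiF_pow, inl_aut, map_inv]

lemma TpSDP (k : ℤ) : Tp (fa s) (ft s) k = inl (GF s k) := by
  unfold Tp ft
  calc fa s ^ k * (inl (gg s 0) * fa s) * fa s ^ (-k - 1)
      = (fa s ^ k * inl (gg s 0) * (fa s ^ k)⁻¹) *
          (fa s ^ k * fa s ^ (1 : ℤ) * fa s ^ (-k - 1)) := by rw [zpow_one]; group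
    _ = inl ((ee s ^ k) (gg s 0)) * (fa s ^ (k + 1 + (-k - 1))) := by
        rw [fa_conj_inl, ← zpow_add, ← zpow_add]
    _ = inl (GF s k) := by
        rw [show k + 1 + (-k - 1) = 0 by ring, zpow_zero, mul_one]; rfl

lemma af_Wbot : af s (Wbot s) = gg s 0 := by
  have h := DFunLike.congr_fun (afbf s) (gg s 0)
  simp only [MonoidHom.comp_apply, MonoidHom.id_apply] at h
  rwa [bf_0] at h

lemma hbSDP : fb s = (ft s)⁻¹ * fa s * ft s := by
  have key : fa s * ft s = ft s * fb s := by
    unfold ft fb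
    calc fa s * (inl (gg s 0) * fa s)
        = (fa s ^ (1 : ℤ) * inl (gg s 0) * (fa s ^ (1 : ℤ))⁻¹) * (fa s * fa s) := by
          rw [zpow_one]; group
      _ = inl ((ee s ^ (1 : ℤ)) (gg s 0)) * (fa s * fa s) := by rw [fa_conj_inl]
      _ = inl (gg s 0 * ((ee s ^ (1 : ℤ)) ((Wbot s)⁻¹ * gg s 0))) * (fa s * fa s) := by
          have hval : af s ((Wbot s)⁻¹ * gg s 0) = (gg s 0)⁻¹ * gg s (0 + 1) := by
            rw [map_mul, map_inv, af_Wbot, af_g s (by omega) (by omega)]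
          rw [zpow_one, ee_apply, ee_apply, hval, af_g s (by omega) (by omega),
            show gg s 0 * ((gg s 0)⁻¹ * gg s (0 + 1)) = gg s (0 + 1) by group]
      _ = inl (gg s 0) * (inl ((ee s ^ (1 : ℤ)) ((Wbot s)⁻¹ * gg s 0)) * (fa s * fa s)) := by
          rw [map_mul]; group
      _ = inl (gg s 0) * ((fa s ^ (1 : ℤ) * inl ((Wbot s)⁻¹ * gg s 0) * (fa s ^ (1 : ℤ))⁻¹) *
            (fa s * fa s)) := by rw [fa_conj_inl]
      _ = inl (gg s 0) * fa s * (inl ((Wbot s)⁻¹ * gg s 0) * fa s) := by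
          rw [zpow_one]; group
  rw [mul_assoc, key]
  group

lemma h2SDP : (ft s)⁻¹ * fb s * ft s =
    W s (fb s) (fa s) * fb s * (W s (fa s) (fb s))⁻¹ := by
  apply (rel_iff s (hbSDP s)).mpr
  have h := FiberRel s 0
  unfold RelG at h ⊢
  rw [TpSDP, TpSDP, TpSDP, TpSDP, TpSDP]
  rw [Vp_congr (G' := fun m => (inl (GF s m) : SDP s)) (k' := 0) (s + 2)
      (fun i hi => ⟨TpSDP s _, TpSDP s _⟩),
    Up_congr (G' := fun m => (inl (GF s m) : SDP s)) (k' := 0 + 1) (s + 1)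
      (fun i hi => ⟨TpSDP s _, TpSDP s _⟩)]
  rw [← map_Vp SemidirectProduct.inl, ← map_Up SemidirectProduct.inl]
  simp only [← map_mul, ← map_inv]
  exact congrArg inl h

end SDPSide


section Iso

open SemidirectProduct

variable (s : ℕ)

def ff3 : Fin 3 → SDP s := ![fa s, fb s, ft s]

lemma hrels : ∀ r ∈ gsrels s, FreeGroup.lift (ff3 s) r = 1 := by
  intro r hr
  rcases Set.mem_insert_iff.mp hr with h | h
  · subst h
    simp only [map_mul, map_inv, FreeGroup.lift_apply_of]
    rw [show ff3 s 2 = ft s from rfl, show ff3 s 0 = fa s from rfl,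
      show ff3 s 1 = fb s from rfl, hbSDP]
    group
  · rw [Set.mem_singleton_iff] at h
    subst h
    simp only [map_mul, map_inv, map_W, FreeGroup.lift_apply_of]
    rw [show ff3 s 2 = ft s from rfl, show ff3 s 0 = fa s from rfl,
      show ff3 s 1 = fb s from rfl]
    exact mul_inv_eq_one.mpr (h2SDP s)

def Phi : PG s →* SDP s := PresentedGroup.toGroup (hrels s)

lemma Phi_a : Phi s (AP s) = fa s := by
  rw [show AP s = PresentedGroup.of 0 from rfl, Phi, PresentedGroup.toGroup.of]
  rfl

lemma Phi_t : Phi s (tP s) = ft s := by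
  rw [show tP s = PresentedGroup.of 2 from rfl, Phi, PresentedGroup.toGroup.of]
  rfl

def f2 : Multiplicative ℤ →* PG s := zpowersHom (PG s) (AP s)

lemma f1_af : (f1 s).comp (af s) = (MulAut.conj (AP s)).toMonoidHom.comp (f1 s) := by
  apply FreeGroup.ext_hom
  intro x
  have hn := nn_eq s
  have hx2 : (x : ℕ) < cc (s + 1) + 3 := by have := x.2; omega
  simp only [MonoidHom.comp_apply, MulEquiv.coe_toMonoidHom, MulAut.conj_apply]
  rw [← gg_of s x]
  by_cases hx : (x : ℕ) < cc (s + 1) + 2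
  · rw [af_g s (by omega) (by omega), f1_g s (by omega) (by omega),
      f1_g s (by omega) (by omega)]
    unfold Tp
    group
  · have hxe : ((x : ℕ) : ℤ) = (cc (s + 1) : ℤ) + 2 := by omega
    rw [hxe, af_top, f1_Wtop, f1_g s (by omega) (by omega)]
    unfold Tp
    group

lemma f1_bf (y : FF s) : f1 s (bf s y) = (AP s)⁻¹ * f1 s y * AP s := by
  have h := DFunLike.congr_fun (f1_af s) (bf s y)
  simp only [MonoidHom.comp_apply, MulEquiv.coe_toMonoidHom, MulAut.conj_apply] at h
  have h2 : af s (bf s y) = y := by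
    have := DFunLike.congr_fun (afbf s) y
    simpa using this
  rw [h2] at h
  rw [h]
  group

lemma Sd : ∀ (d : ℤ) (x : FF s), f1 s ((ee s ^ d) x) = AP s ^ d * f1 s x * AP s ^ (-d) := by
  intro d
  induction d using Int.induction_on with
  | zero => intro x; simp
  | succ k ih =>
    intro x
    have e1 : (ee s ^ ((k : ℤ) + 1)) x = af s ((ee s ^ (k : ℤ)) x) := by
      rw [show (k : ℤ) + 1 = 1 + k by ring, zpow_add, zpow_one, MulAut.mul_apply, ee_apply]
    rw [e1]
    have h := DFunLike.congr_fun (f1_af s) ((ee s ^ (k : ℤ)) x)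
    simp only [MonoidHom.comp_apply, MulEquiv.coe_toMonoidHom, MulAut.conj_apply] at h
    rw [h, ih]
    group
  | pred k ih =>
    intro x
    have e1 : (ee s ^ (-(k : ℤ) - 1)) x = bf s ((ee s ^ (-(k : ℤ))) x) := by
      rw [show -(k : ℤ) - 1 = -1 + -(k : ℤ) by ring, zpow_add, zpow_neg_one,
        MulAut.mul_apply, ee_symm_apply]
    rw [e1, f1_bf, ih]
    group

lemma compat : ∀ g : Multiplicative ℤ,
    (f1 s).comp ((phiF s) g).toMonoidHom = (MulAut.conj (f2 s g)).toMonoidHom.comp (f1 s) := by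
  intro g
  apply FreeGroup.ext_hom
  intro x
  simp only [MonoidHom.comp_apply, MulEquiv.coe_toMonoidHom, MulAut.conj_apply]
  have hphi : phiF s g = ee s ^ (Multiplicative.toAdd g) := by rw [phiF, zpowersHom_apply]
  have hf2 : f2 s g = AP s ^ (Multiplicative.toAdd g) := by rw [f2, zpowersHom_apply]
  rw [hphi, hf2, Sd s _ (FreeGroup.of x), zpow_neg]

def Psi : SDP s →* PG s := SemidirectProduct.lift (f1 s) (f2 s) (compat s)

lemma Psi_fa : Psi s (fa s) = AP s := by
  rw [fa, Psi, SemidirectProduct.lift_inr]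
  rw [f2, zpowersHom_apply]
  simp [zmul]

lemma PsiPhi : (Psi s).comp (Phi s) = MonoidHom.id (PG s) := by
  apply PresentedGroup.ext
  intro x
  simp only [MonoidHom.comp_apply, MonoidHom.id_apply]
  fin_cases x
  · show (Psi s) ((Phi s) (PresentedGroup.of (0 : Fin 3))) = PresentedGroup.of (0 : Fin 3)
    rw [show (PresentedGroup.of (0 : Fin 3) : PG s) = AP s from rfl, Phi_a, Psi_fa]
  · show (Psi s) ((Phi s) (PresentedGroup.of (1 : Fin 3))) = PresentedGroup.of (1 : Fin 3)
    rw [show (PresentedGroup.of (1 : Fin 3) : PG s) = bP s from rfl]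
    rw [show Phi s (bP s) = fb s from by
      rw [show bP s = PresentedGroup.of 1 from rfl, Phi, PresentedGroup.toGroup.of]; rfl]
    rw [fb, Psi, map_mul, SemidirectProduct.lift_inl, fa, SemidirectProduct.lift_inr]
    rw [map_mul, map_inv, f1_Wbot, f1_g s (by omega) (by have := nn_eq s; omega)]
    rw [show f2 s (zmul) = AP s from by rw [f2, zpowersHom_apply]; simp [zmul]]
    rw [hbP]
    unfold Tp
    group
  · show (Psi s) ((Phi s) (PresentedGroup.of (2 : Fin 3))) = PresentedGroup.of (2 : Fin 3)
    rw [show (PresentedGroup.of (2 : Fin 3) : PG s) = tP s from rfl, Phi_t]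
    rw [ft, Psi, map_mul, SemidirectProduct.lift_inl, fa, SemidirectProduct.lift_inr]
    rw [f1_g s (by omega) (by have := nn_eq s; omega)]
    rw [show f2 s (zmul) = AP s from by rw [f2, zpowersHom_apply]; simp [zmul]]
    unfold Tp
    group

lemma PhiPsi : (Phi s).comp (Psi s) = MonoidHom.id (SDP s) := by
  apply SemidirectProduct.hom_ext
  · apply FreeGroup.ext_hom
    intro x
    have hn := nn_eq s
    have hx2 : (x : ℕ) < cc (s + 1) + 3 := by have := x.2; omega
    simp only [MonoidHom.comp_apply, MonoidHom.id_apply]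
    rw [Psi, SemidirectProduct.lift_inl]
    rw [f1, FreeGroup.lift_apply_of]
    rw [map_Tp, Phi_a, Phi_t, TpSDP, GF_eq s (by omega) (by omega), gg_of]
  · apply MonoidHom.ext_mint
    simp only [MonoidHom.comp_apply, MonoidHom.id_apply]
    show (Phi s) ((Psi s) (fa s)) = fa s
    rw [Psi_fa, Phi_a]

end Iso


end Stmt16

theorem stmt_16 (s : ℕ) (hs : 3 ≤ s) :
    ∃ φ : Multiplicative ℤ →* MulAut (FreeGroup (Fin (s + 4 + (8 + s) * (s + 1) / 2))),
      Nonempty (PresentedGroup (gsrels s) ≃*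
        FreeGroup (Fin (s + 4 + (8 + s) * (s + 1) / 2)) ⋊[φ] Multiplicative ℤ) := by
  exact ⟨Stmt16.phiF s, ⟨MonoidHom.toMulEquiv (Stmt16.Phi s) (Stmt16.Psi s)
    (Stmt16.PsiPhi s) (Stmt16.PhiPsi s)⟩⟩
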